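/- Let E be a number field and Λ a finite-dimensional E-vector space, viewed as a ℚ-vector space. Let H_E be the space of ℚ-bilinear alternating forms φ: Λ × Λ → ℚ satisfying φ(uλ₁, λ₂) = φ(λ₁, uλ₂) for all u ∈ E and λ₁, λ₂ ∈ Λ. Then the map φ_E ↦ Tr_{E/ℚ} ∘ φ_E gives a ℚ-linear isomorphism from the space Hom_E(∧²_E Λ, E) of E-bilinear alternating forms on Λ onto H_E. -/

import Mathlib

/-- For a number field E and a finite-dimensional E-vector space Λ, composing with
the trace Tr_{E/ℚ} gives a bijection between E-bilinear alternating forms on Λ and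
ℚ-bilinear alternating forms φ on Λ satisfying φ(uλ₁, λ₂) = φ(λ₁, uλ₂) for all
u ∈ E. -/
theorem stmt_18 (E Λ : Type*) [Field E] [NumberField E]
    [AddCommGroup Λ] [Module E Λ] [Module ℚ Λ] [IsScalarTower ℚ E Λ]
    [FiniteDimensional E Λ] :
    (∀ φ : Λ →ₗ[E] Λ →ₗ[E] E, (∀ x, φ x x = 0) →
      ((∀ x : Λ, Algebra.trace ℚ E (φ x x) = 0) ∧
        ∀ (u : E) (x y : Λ),
          Algebra.trace ℚ E (φ (u • x) y) = Algebra.trace ℚ E (φ x (u • y)))) ∧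
    (∀ ψ : Λ →ₗ[ℚ] Λ →ₗ[ℚ] ℚ, (∀ x, ψ x x = 0) →
      (∀ (u : E) (x y : Λ), ψ (u • x) y = ψ x (u • y)) →
      ∃! φ : Λ →ₗ[E] Λ →ₗ[E] E, (∀ x, φ x x = 0) ∧
        ∀ x y : Λ, Algebra.trace ℚ E (φ x y) = ψ x y) := by
  constructor
  · intro φ hφ
    refine ⟨fun x => by rw [hφ x]; simp, fun u x y => ?_⟩
    rw [map_smul, LinearMap.smul_apply, LinearMap.map_smul]
  · intro ψ hψ0 hψ
    have hskew : ∀ x y, ψ x y = -ψ y x := by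
      intro x y
      have h := hψ0 (x + y)
      simp only [map_add, LinearMap.add_apply, hψ0] at h
      linarith
    have hψ0' : ∀ (u : E) (x : Λ), ψ (u • x) x = 0 := by
      intro u x
      have h1 : ψ (u • x) x = ψ x (u • x) := hψ u x x
      have h2 : ψ x (u • x) = -ψ (u • x) x := hskew _ _
      linarith
    have hnd : (Algebra.traceForm ℚ E).Nondegenerate := traceForm_nondegenerate ℚ E
    have hinj : ∀ β γ : E, (∀ u : E, Algebra.trace ℚ E (β * u) =
        Algebra.trace ℚ E (γ * u)) → β = γ := by
      intro β γ h
      have h0 : ∀ u, (Algebra.traceForm ℚ E) (β - γ) u = 0 := by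
        intro u
        simp only [map_sub, LinearMap.sub_apply, Algebra.traceForm_apply, h u, sub_self]
      exact sub_eq_zero.mp (hnd.1 _ h0)
    -- the functional u ↦ ψ (u • x) y
    have Fdef : ∀ x y : Λ, ∃ F : E →ₗ[ℚ] ℚ, ∀ u, F u = ψ (u • x) y := by
      intro x y
      refine ⟨⟨⟨fun u => ψ (u • x) y, ?_⟩, ?_⟩, fun u => rfl⟩
      · intro a b
        show ψ ((a + b) • x) y = ψ (a • x) y + ψ (b • x) y
        rw [add_smul, map_add, LinearMap.add_apply]
      · intro q a
        show ψ ((q • a) • x) y = q • ψ (a • x) y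
        rw [smul_assoc, map_smul, LinearMap.smul_apply]
    choose F hF using Fdef
    set f : Λ → Λ → E :=
      fun x y => ((Algebra.traceForm ℚ E).toDual hnd).symm (F x y) with hf
    have htr : ∀ (x y : Λ) (u : E), Algebra.trace ℚ E (f x y * u) = ψ (u • x) y := by
      intro x y u
      have h := LinearMap.BilinForm.apply_toDual_symm_apply
        (B := Algebra.traceForm ℚ E) (hB := hnd) (F x y) u
      rw [Algebra.traceForm_apply] at h
      rw [hf]
      rw [h, hF]
    have fadd_l : ∀ x x' y, f (x + x') y = f x y + f x' y := by
      intro x x' y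
      apply hinj
      intro u
      calc Algebra.trace ℚ E (f (x + x') y * u) = ψ (u • (x + x')) y := htr _ _ _
        _ = ψ (u • x) y + ψ (u • x') y := by rw [smul_add, map_add, LinearMap.add_apply]
        _ = Algebra.trace ℚ E (f x y * u) + Algebra.trace ℚ E (f x' y * u) := by
              rw [htr, htr]
        _ = Algebra.trace ℚ E ((f x y + f x' y) * u) := by rw [add_mul, map_add]
    have fsmul_l : ∀ (v : E) x y, f (v • x) y = v * f x y := by
      intro v x y
      apply hinj
      intro u
      calc Algebra.trace ℚ E (f (v • x) y * u) = ψ (u • v • x) y := htr _ _ _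
        _ = ψ ((v * u) • x) y := by rw [smul_smul, mul_comm u v]
        _ = Algebra.trace ℚ E (f x y * (v * u)) := (htr _ _ _).symm
        _ = Algebra.trace ℚ E (v * f x y * u) := by ring_nf
    have fadd_r : ∀ x y y', f x (y + y') = f x y + f x y' := by
      intro x y y'
      apply hinj
      intro u
      calc Algebra.trace ℚ E (f x (y + y') * u) = ψ (u • x) (y + y') := htr _ _ _
        _ = ψ (u • x) y + ψ (u • x) y' := by rw [map_add]
        _ = Algebra.trace ℚ E (f x y * u) + Algebra.trace ℚ E (f x y' * u) := by
              rw [htr, htr]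
        _ = Algebra.trace ℚ E ((f x y + f x y') * u) := by rw [add_mul, map_add]
    have fsmul_r : ∀ (v : E) x y, f x (v • y) = v * f x y := by
      intro v x y
      apply hinj
      intro u
      calc Algebra.trace ℚ E (f x (v • y) * u) = ψ (u • x) (v • y) := htr _ _ _
        _ = ψ (v • u • x) y := (hψ v (u • x) y).symm
        _ = ψ ((v * u) • x) y := by rw [smul_smul]
        _ = Algebra.trace ℚ E (f x y * (v * u)) := (htr _ _ _).symm
        _ = Algebra.trace ℚ E (v * f x y * u) := by ring_nf
    have falt : ∀ x, f x x = 0 := by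
      intro x
      apply hinj
      intro u
      rw [htr, hψ0', zero_mul, map_zero]
    set φ : Λ →ₗ[E] Λ →ₗ[E] E := LinearMap.mk₂ E f fadd_l
      (fun v x y => by rw [smul_eq_mul, fsmul_l]) fadd_r
      (fun v x y => by rw [smul_eq_mul, fsmul_r]) with hφdef
    have hφtr : ∀ x y, Algebra.trace ℚ E (φ x y) = ψ x y := by
      intro x y
      have h := htr x y 1
      rw [mul_one, one_smul] at h
      simpa [hφdef] using h
    refine ⟨φ, ⟨fun x => falt x, hφtr⟩, ?_⟩
    intro φ' ⟨_, hφ'tr⟩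
    ext x y
    show φ' x y = f x y
    apply hinj
    intro u
    calc Algebra.trace ℚ E (φ' x y * u) = Algebra.trace ℚ E (φ' (u • x) y) := by
          rw [map_smul, LinearMap.smul_apply, smul_eq_mul, mul_comm]
      _ = ψ (u • x) y := hφ'tr _ _
      _ = Algebra.trace ℚ E (f x y * u) := (htr _ _ _).symm
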